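/- arXiv:1711.08322 — 2 statements merged into one kernel-verified Lean document; each statement's English description precedes it below -/
import Mathlib

section
/- Define H : [0,1] × ℝ → ℂ² by H(s,t) = (√(1 − s²/2)·e^{it}, (s/√2)·e^{−it}). Then H is continuous; H(s,t) ∈ V_{S³} = {(z₁,z₂) ∈ S³ : |z₂| ≤ 3/4} for all (s,t); for each fixed s the map t ↦ H(s,t) is 2π-periodic and injective on [0, 2π); H(0,t) = (e^{it}, 0) parametrizes the spine of V_{S³}; and H(1,t) = γ(t) = (e^{it}/√2, e^{−it}/√2). Hence the curve γ is isotopic within the solid torus V_{S³}, through embedded circles, to the spine of V_{S³}. -/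
noncomputable section

open Real

/-- The unit 3-sphere in `ℂ²`. -/
def sphere3 : Set (ℂ × ℂ) :=
  {p | ‖p.1‖ ^ 2 + ‖p.2‖ ^ 2 = 1}

/-- The solid torus `V_{S³} = {(z₁,z₂) ∈ S³ : |z₂| ≤ 3/4}`. -/
def solidTorus : Set (ℂ × ℂ) :=
  {p | p ∈ sphere3 ∧ ‖p.2‖ ≤ 3 / 4}

/-- The isotopy `H(s,t) = (√(1 - s²/2)·e^{it}, (s/√2)·e^{-it})`. -/
def Hiso (s t : ℝ) : ℂ × ℂ :=
  ((Real.sqrt (1 - s ^ 2 / 2) : ℂ) * Complex.exp (t * Complex.I),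
   ((s / Real.sqrt 2 : ℝ) : ℂ) * Complex.exp (-(t * Complex.I)))

/-- The curve `γ(t) = (e^{it}/√2, e^{-it}/√2)`. -/
def γcurve (t : ℝ) : ℂ × ℂ :=
  (Complex.exp (t * Complex.I) / (Real.sqrt 2 : ℂ),
   Complex.exp (-(t * Complex.I)) / (Real.sqrt 2 : ℂ))

/-- `H(s,t) = (√(1-s²/2)·e^{it}, (s/√2)·e^{-it})` is a continuous family of embedded
circles in the solid torus `V_{S³}` connecting the spine `t ↦ (e^{it},0)` (at `s = 0`)
to the Legendrian curve `γ` (at `s = 1`); hence `γ` is isotopic within `V_{S³}`,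
through embedded circles, to the spine of `V_{S³}`. -/
theorem gamma_isotopic_to_spine :
    Continuous (fun p : ℝ × ℝ => Hiso p.1 p.2) ∧
    (∀ s ∈ Set.Icc (0 : ℝ) 1,
      (∀ t : ℝ, Hiso s t ∈ solidTorus) ∧
      (∀ t : ℝ, Hiso s (t + 2 * π) = Hiso s t) ∧
      Set.InjOn (Hiso s) (Set.Ico 0 (2 * π))) ∧
    (∀ t : ℝ, Hiso 0 t = (Complex.exp (t * Complex.I), 0)) ∧
    (∀ t : ℝ, Hiso 1 t = γcurve t) := by
  have sqrt2_pos : (0:ℝ) < Real.sqrt 2 := Real.sqrt_pos.mpr (by norm_num)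
  have sqrt2_sq : Real.sqrt 2 ^ 2 = 2 := Real.sq_sqrt (by norm_num)
  refine ⟨?_, ?_, ?_, ?_⟩
  · unfold Hiso
    apply Continuous.prodMk
    · exact (Complex.continuous_ofReal.comp
        ((continuous_const.sub (((continuous_fst.pow 2)).div_const 2)).sqrt)).mul
        (Complex.continuous_exp.comp
          ((Complex.continuous_ofReal.comp continuous_snd).mul continuous_const))
    · exact (Complex.continuous_ofReal.comp ((continuous_fst).div_const _)).mul
        (Complex.continuous_exp.comp
          (((Complex.continuous_ofReal.comp continuous_snd).mul continuous_const).neg))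
  · rintro s ⟨hs0, hs1⟩
    have hnn : (0:ℝ) ≤ 1 - s ^ 2 / 2 := by nlinarith
    refine ⟨?_, ?_, ?_⟩
    · intro t
      have h1 : ‖((Real.sqrt (1 - s ^ 2 / 2) : ℂ))‖ = Real.sqrt (1 - s ^ 2 / 2) := by
        rw [Complex.norm_real, Real.norm_eq_abs, abs_of_nonneg (Real.sqrt_nonneg _)]
      have h2 : ‖((s / Real.sqrt 2 : ℝ) : ℂ)‖ = s / Real.sqrt 2 := by
        rw [Complex.norm_real, Real.norm_eq_abs, abs_of_nonneg (by positivity)]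
      have he1 : ‖(Complex.exp ((t:ℂ) * Complex.I))‖ = 1 := by
        rw [Complex.norm_exp]; simp
      have he2 : ‖(Complex.exp (-((t:ℂ) * Complex.I)))‖ = 1 := by
        rw [Complex.norm_exp]; simp
      constructor
      · show ‖(Hiso s t).1‖ ^ 2 + ‖(Hiso s t).2‖ ^ 2 = 1
        simp only [Hiso]
        rw [norm_mul, norm_mul, h1, h2, he1, he2, mul_one, mul_one,
          Real.sq_sqrt hnn, div_pow, sqrt2_sq]
        ring
      · show ‖(Hiso s t).2‖ ≤ 3 / 4
        simp only [Hiso]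
        rw [norm_mul, h2, he2, mul_one, div_le_iff₀ sqrt2_pos]
        nlinarith
    · intro t
      unfold Hiso
      have key : Complex.exp ((((t + 2 * π) : ℝ) : ℂ) * Complex.I)
          = Complex.exp ((t:ℂ) * Complex.I) := by
        push_cast
        rw [add_mul, Complex.exp_add, Complex.exp_two_pi_mul_I, mul_one]
      have key2 : Complex.exp (-((((t + 2 * π) : ℝ) : ℂ) * Complex.I))
          = Complex.exp (-((t:ℂ) * Complex.I)) := by
        push_cast
        rw [add_mul, neg_add, Complex.exp_add]
        simp [Complex.exp_neg, Complex.exp_two_pi_mul_I]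
      rw [key, key2]
    · intro t1 ht1 t2 ht2 heq
      have hcne : ((Real.sqrt (1 - s ^ 2 / 2) : ℝ) : ℂ) ≠ 0 := by
        simp only [ne_eq, Complex.ofReal_eq_zero]
        exact (Real.sqrt_pos.mpr (by nlinarith)).ne'
      have h1 : ((Real.sqrt (1 - s ^ 2 / 2) : ℝ) : ℂ) * Complex.exp ((t1:ℂ) * Complex.I)
          = ((Real.sqrt (1 - s ^ 2 / 2) : ℝ) : ℂ) * Complex.exp ((t2:ℂ) * Complex.I) :=
        congrArg Prod.fst heq
      have h2 : Complex.exp ((t1:ℂ) * Complex.I) = Complex.exp ((t2:ℂ) * Complex.I) :=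
        mul_left_cancel₀ hcne h1
      obtain ⟨n, hn⟩ := Complex.exp_eq_exp_iff_exists_int.mp h2
      have hI : ((t1:ℂ)) = (t2:ℂ) + n * (2 * π) := by
        have := hn
        have hIne : (Complex.I) ≠ 0 := Complex.I_ne_zero
        field_simp at this ⊢
        have h' : ((t1:ℂ)) * Complex.I = ((t2:ℂ) + n * (2 * π)) * Complex.I := by
          rw [hn]; ring
        exact mul_right_cancel₀ hIne (h'.trans (by ring))
      have hr : t1 = t2 + n * (2 * π) := by exact_mod_cast hI
      obtain ⟨h10, h12⟩ := ht1
      obtain ⟨h20, h22⟩ := ht2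
      have hpi := Real.pi_pos
      have hn1 : (n : ℝ) < 1 := by nlinarith
      have hn2 : (-1 : ℝ) < (n : ℝ) := by nlinarith
      have : n = 0 := by
        have b1 : n < 1 := by exact_mod_cast hn1
        have b2 : -1 < n := by exact_mod_cast hn2
        omega
      rw [this] at hr
      simpa using hr
  · intro t
    unfold Hiso
    norm_num
  · intro t
    unfold Hiso γcurve
    have h : Real.sqrt (1 - 1 ^ 2 / 2) = (Real.sqrt 2)⁻¹ := by
      rw [show (1:ℝ) - 1 ^ 2 / 2 = 2⁻¹ by norm_num, Real.sqrt_inv]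
    rw [h]
    push_cast
    refine Prod.ext ?_ ?_ <;> simp <;> ring
end
end

section
/- For every k ∈ ℤ, let X_k be the topological space obtained from the disjoint union of two copies of the solid torus S¹ × D² (S¹ the unit circle, D² the closed unit disc in ℂ) by identifying each boundary point (u, w) with |w| = 1 of the first copy with the boundary point (w, u^{−1}·w^{−k}) of the second copy, equipped with the quotient topology. Then X_k is homeomorphic to the 3-sphere S³. (This is the statement that surgery along S¹×{*} ⊂ S¹×S² with any integral framing k produces S³: the gluing sends the meridian of the glued-in solid torus to the class λ₁ − kμ₁ on the boundary of the complementary solid torus.) -/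
noncomputable section

/-- The solid torus `S¹ × D²`, with `S¹` the unit circle and `D²` the closed unit
disc in `ℂ`. -/
abbrev SolidTorus : Type :=
  {u : ℂ // ‖u‖ = 1} × {w : ℂ // ‖w‖ ≤ 1}

/-- The gluing relation for framing `k`: the boundary point `(u,w)` (with `|w| = 1`)
of the first copy of `S¹ × D²` is identified with the boundary point
`(w, u⁻¹·w⁻ᵏ)` of the second copy. -/
def glueRel (k : ℤ) (x y : SolidTorus ⊕ SolidTorus) : Prop :=
  ∃ p : SolidTorus, ‖(p.2 : ℂ)‖ = 1 ∧ x = Sum.inl p ∧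
    ∃ q : SolidTorus, (q.1 : ℂ) = (p.2 : ℂ) ∧
      (q.2 : ℂ) = ((p.1 : ℂ))⁻¹ * ((p.2 : ℂ)) ^ (-k) ∧ y = Sum.inr q

/-- The result of gluing two solid tori `S¹ × D²` along their boundaries by
`(u,w) ↦ (w, u⁻¹·w⁻ᵏ)`, with the quotient topology. -/
abbrev SurgeredSpace (k : ℤ) : Type := Quot (glueRel k)

namespace SurgeryProof

abbrev S3 := {z : ℂ × ℂ // ‖z.1‖ ^ 2 + ‖z.2‖ ^ 2 = 1}

lemma conj_eq_inv {u : ℂ} (hu : ‖u‖ = 1) : (starRingEnd ℂ) u = u⁻¹ := by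
  have h : u * (starRingEnd ℂ) u = 1 := by
    rw [Complex.mul_conj]
    norm_cast
    rw [← Complex.sq_norm, hu]; norm_num
  exact (eq_inv_of_mul_eq_one_left (by rw [mul_comm] at h; exact h))

lemma sqrt_half {w : ℂ} (hb : ‖w‖ = 1) :
    Real.sqrt (1 - ‖w‖ ^ 2 / 2) = (Real.sqrt 2)⁻¹ := by
  rw [hb]
  have : (1 : ℝ) - 1 ^ 2 / 2 = 2⁻¹ := by norm_num
  rw [this, Real.sqrt_inv]

lemma s2pos : (0:ℝ) < Real.sqrt 2 := Real.sqrt_pos.mpr (by norm_num)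
lemma s2sq : (Real.sqrt 2) ^ 2 = 2 := Real.sq_sqrt (by norm_num)
lemma s2ne : ((Real.sqrt 2 : ℝ) : ℂ) ≠ 0 := by
  simp [Complex.ofReal_ne_zero, ne_of_gt s2pos]

/-- first solid torus onto `{|z₂| ≤ |z₁|}` -/
def f₁ : SolidTorus → S3 := fun p =>
  ⟨((p.1 : ℂ) * (Real.sqrt (1 - ‖(p.2 : ℂ)‖ ^ 2 / 2) : ℝ),
    (p.2 : ℂ) / (Real.sqrt 2 : ℝ)), by
      obtain ⟨⟨u, hu⟩, ⟨w, hw⟩⟩ := p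
      have hw2 : ‖w‖ ^ 2 ≤ 1 := by nlinarith [norm_nonneg w]
      simp only [norm_mul, norm_div, Complex.norm_real, Real.norm_eq_abs,
        abs_of_nonneg (Real.sqrt_nonneg _), hu, one_mul]
      rw [Real.sq_sqrt (by linarith), div_pow, s2sq]
      ring
    ⟩

/-- second solid torus onto `{|z₁| ≤ |z₂|}` -/
def f₂ (k : ℤ) : SolidTorus → S3 := fun q =>
  ⟨((starRingEnd ℂ) (q.2 : ℂ) * (q.1 : ℂ) ^ (-k) / (Real.sqrt 2 : ℝ),
    (q.1 : ℂ) * (Real.sqrt (1 - ‖(q.2 : ℂ)‖ ^ 2 / 2) : ℝ)), by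
      obtain ⟨⟨v, hv⟩, ⟨z, hz⟩⟩ := q
      have hz2 : ‖z‖ ^ 2 ≤ 1 := by nlinarith [norm_nonneg z]
      simp only [norm_mul, norm_div, Complex.norm_real, Real.norm_eq_abs, norm_zpow,
        Complex.norm_conj, abs_of_nonneg (Real.sqrt_nonneg _), hv, one_zpow, mul_one, one_mul]
      rw [Real.sq_sqrt (by linarith), div_pow, s2sq]
      ring
    ⟩

def F (k : ℤ) : SolidTorus ⊕ SolidTorus → S3 := Sum.elim f₁ (f₂ k)

lemma compat (k : ℤ) : ∀ x y, glueRel k x y → F k x = F k y := by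
  rintro x y ⟨⟨⟨u, hu⟩, ⟨w, hw⟩⟩, hb, rfl, ⟨⟨v, hv⟩, ⟨z, hz⟩⟩, hq1, hq2, rfl⟩
  simp only at hb hq1 hq2
  have hwne : w ≠ 0 := by intro h; rw [h] at hb; simp at hb
  have hbz : ‖z‖ = 1 := by
    rw [hq2, norm_mul, norm_inv, norm_zpow, hu, hb, one_zpow, inv_one, one_mul]
  apply Subtype.ext
  simp only [F, Sum.elim_inl, Sum.elim_inr, f₁, f₂]
  refine Prod.ext ?_ ?_
  · -- u * √(1-|w|²/2) = conj z * v^(-k) / √2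
    simp only [sqrt_half hb, hq1]
    rw [hq2]
    rw [map_mul, map_inv₀, map_zpow₀, conj_eq_inv hu, inv_inv,
      conj_eq_inv hb, inv_zpow, ← zpow_neg, neg_neg]
    push_cast
    rw [div_eq_mul_inv]
    congr 1
    rw [mul_assoc, ← zpow_add₀ hwne]
    simp
  · -- w / √2 = v * √(1-|z|²/2)
    simp only [sqrt_half hbz, hq1]
    push_cast
    rw [div_eq_mul_inv]

lemma f₁_inj : Function.Injective f₁ := by
  rintro ⟨⟨u, hu⟩, ⟨w, hw⟩⟩ ⟨⟨u', hu'⟩, ⟨w', hw'⟩⟩ h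
  have h' := congrArg Subtype.val h
  rw [Prod.ext_iff] at h'
  obtain ⟨h1, h2⟩ := h'
  simp only [f₁] at h1 h2
  have hw2 : w = w' := by
    field_simp [s2ne] at h2; exact h2
  subst hw2
  have hpos : (0:ℝ) < Real.sqrt (1 - ‖w‖ ^ 2 / 2) := by
    apply Real.sqrt_pos.mpr
    nlinarith [norm_nonneg w]
  have hne : ((Real.sqrt (1 - ‖w‖ ^ 2 / 2) : ℝ) : ℂ) ≠ 0 := by
    simpa using ne_of_gt hpos
  have : u = u' := mul_right_cancel₀ hne h1
  simp [this]

lemma f₂_inj (k : ℤ) : Function.Injective (f₂ k) := by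
  rintro ⟨⟨v, hv⟩, ⟨z, hz⟩⟩ ⟨⟨v', hv'⟩, ⟨z', hz'⟩⟩ h
  have h' := congrArg Subtype.val h
  rw [Prod.ext_iff] at h'
  obtain ⟨h1, h2⟩ := h'
  simp only [f₂] at h1 h2
  -- from h2, take abs to get |z| = |z'|
  have ha : ‖z‖ = ‖z'‖ := by
    have := congrArg (‖·‖) h2
    simp only [norm_mul, Complex.norm_real, Real.norm_eq_abs, hv, hv', one_mul,
      abs_of_nonneg (Real.sqrt_nonneg _)] at this
    have h3 := congrArg (fun t => t ^ 2) this
    rw [Real.sq_sqrt (by nlinarith [norm_nonneg z]),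
      Real.sq_sqrt (by nlinarith [norm_nonneg z'])] at h3
    nlinarith [norm_nonneg z, norm_nonneg z']
  have hpos : (0:ℝ) < Real.sqrt (1 - ‖z‖ ^ 2 / 2) := by
    apply Real.sqrt_pos.mpr
    nlinarith [norm_nonneg z]
  have hne : ((Real.sqrt (1 - ‖z‖ ^ 2 / 2) : ℝ) : ℂ) ≠ 0 := by
    simpa using ne_of_gt hpos
  rw [← ha] at h2
  have hvv : v = v' := mul_right_cancel₀ hne h2
  subst hvv
  have hvne : v ≠ 0 := by intro h; rw [h] at hv; simp at hv
  have hzz : z = z' := by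
    have : (starRingEnd ℂ) z = (starRingEnd ℂ) z' := by
      field_simp [s2ne, zpow_ne_zero, hvne] at h1
      exact h1
    exact star_injective this
  simp [hzz]

lemma mixed (k : ℤ) (p q : SolidTorus) (h : f₁ p = f₂ k q) :
    glueRel k (Sum.inl p) (Sum.inr q) := by
  obtain ⟨⟨u, hu⟩, ⟨w, hw⟩⟩ := p
  obtain ⟨⟨v, hv⟩, ⟨z, hz⟩⟩ := q
  have h' := congrArg Subtype.val h
  rw [Prod.ext_iff] at h'
  obtain ⟨h1, h2⟩ := h'
  simp only [f₁, f₂] at h1 h2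
  -- abs equations
  have a1 : Real.sqrt (1 - ‖w‖ ^ 2 / 2) = ‖z‖ / Real.sqrt 2 := by
    have := congrArg (‖·‖) h1
    simpa [norm_mul, norm_div, norm_zpow, Complex.norm_real, Real.norm_eq_abs, hu, hv,
      abs_of_nonneg (Real.sqrt_nonneg _)] using this
  have a2 : ‖w‖ / Real.sqrt 2 = Real.sqrt (1 - ‖z‖ ^ 2 / 2) := by
    have := congrArg (‖·‖) h2
    simpa [norm_mul, norm_div, Complex.norm_real, Real.norm_eq_abs, hv,
      abs_of_nonneg (Real.sqrt_nonneg _)] using this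
  have sq1 : 1 - ‖w‖ ^ 2 / 2 = ‖z‖ ^ 2 / 2 := by
    have := congrArg (fun t => t ^ 2) a1
    simp only [div_pow, s2sq] at this
    rwa [Real.sq_sqrt (by nlinarith [norm_nonneg w])] at this
  have hb : ‖w‖ = 1 := by
    nlinarith [norm_nonneg w, norm_nonneg z]
  have hbz : ‖z‖ = 1 := by
    nlinarith [norm_nonneg w, norm_nonneg z]
  have hwne : w ≠ 0 := by intro h; rw [h] at hb; simp at hb
  -- identify v = w
  have hvw : v = w := by
    rw [sqrt_half hbz] at h2
    push_cast at h2
    field_simp at h2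
    exact h2.symm
  -- identify z
  have hzval : z = u⁻¹ * w ^ (-k) := by
    rw [sqrt_half hb, hvw] at h1
    push_cast at h1
    -- h1 : u * (√2)⁻¹ = conj z * w^(-k) / √2
    have h1' : u = (starRingEnd ℂ) z * w ^ (-k) := by
      rw [div_eq_mul_inv] at h1
      exact mul_right_cancel₀ (inv_ne_zero s2ne) h1
    have : (starRingEnd ℂ) u = z * (starRingEnd ℂ) (w ^ (-k)) := by
      rw [h1']; simp [mul_comm]
    rw [conj_eq_inv hu, map_zpow₀, conj_eq_inv hb, inv_zpow, ← zpow_neg] at this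
    rw [this, neg_neg, mul_assoc, ← zpow_add₀ hwne, add_neg_cancel, zpow_zero, mul_one]
  exact ⟨⟨⟨u, hu⟩, ⟨w, hw⟩⟩, hb, rfl, ⟨⟨v, hv⟩, ⟨z, hz⟩⟩, by simp [hvw], by simp [hzval], rfl⟩

lemma F_inj (k : ℤ) : Function.Injective (Quot.lift (F k) (compat k)) := by
  intro x y
  induction x using Quot.ind with | _ a =>
  induction y using Quot.ind with | _ b =>
  intro h
  cases a with
  | inl p => cases b with
    | inl p' => exact congrArg _ (congrArg Sum.inl (f₁_inj h))
    | inr q => exact Quot.sound (mixed k p q h)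
  | inr q => cases b with
    | inl p' => exact (Quot.sound (mixed k p' q h.symm)).symm
    | inr q' => exact congrArg _ (congrArg Sum.inr (f₂_inj k h))

lemma F_surj (k : ℤ) : Function.Surjective (Quot.lift (F k) (compat k)) := by
  rintro ⟨⟨z₁, z₂⟩, hz⟩
  simp only at hz
  rcases le_total (‖z₂‖) (‖z₁‖) with hle | hle
  · -- use f₁
    have h1pos : (0:ℝ) < ‖z₁‖ := by
      rcases eq_or_lt_of_le (norm_nonneg z₁) with h | h
      · exfalso
        rw [← h] at hle
        have : ‖z₂‖ = 0 := le_antisymm hle (norm_nonneg z₂)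
        rw [← h, this] at hz; norm_num at hz
      · exact h
    have h1ne : z₁ ≠ 0 := by
      intro h; rw [h] at h1pos; simp at h1pos
    have hu : ‖z₁ / (‖z₁‖ : ℝ)‖ = 1 := by
      rw [norm_div, Complex.norm_real, Real.norm_eq_abs, abs_of_pos h1pos, div_self (ne_of_gt h1pos)]
    have hw : ‖(Real.sqrt 2 : ℝ) * z₂‖ ≤ 1 := by
      rw [norm_mul, Complex.norm_real, Real.norm_eq_abs, abs_of_pos s2pos]
      nlinarith [norm_nonneg z₂, Real.sqrt_nonneg (2:ℝ), s2sq]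
    refine ⟨Quot.mk _ (Sum.inl ⟨⟨_, hu⟩, ⟨_, hw⟩⟩), ?_⟩
    apply Subtype.ext
    simp only [Quot.lift, F, Sum.elim_inl, f₁]
    have habs : ‖(Real.sqrt 2 : ℝ) * z₂‖ ^ 2 = 2 * ‖z₂‖ ^ 2 := by
      rw [norm_mul, Complex.norm_real, Real.norm_eq_abs, abs_of_pos s2pos, mul_pow, s2sq]
    refine Prod.ext ?_ ?_
    · simp only [habs]
      have : (1 : ℝ) - 2 * ‖z₂‖ ^ 2 / 2 = ‖z₁‖ ^ 2 := by linarith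
      rw [this, Real.sqrt_sq (norm_nonneg z₁)]
      exact div_mul_cancel₀ z₁ (by simpa using ne_of_gt h1pos)
    · simp only
      rw [mul_comm, mul_div_assoc, div_self s2ne, mul_one]
  · -- use f₂
    have h2pos : (0:ℝ) < ‖z₂‖ := by
      rcases eq_or_lt_of_le (norm_nonneg z₂) with h | h
      · exfalso
        rw [← h] at hle
        have : ‖z₁‖ = 0 := le_antisymm hle (norm_nonneg z₁)
        rw [← h, this] at hz; norm_num at hz
      · exact h
    have h2ne : z₂ ≠ 0 := by
      intro h; rw [h] at h2pos; simp at h2pos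
    set v : ℂ := z₂ / (‖z₂‖ : ℝ) with hvdef
    have hvabs : ‖v‖ = 1 := by
      rw [hvdef, norm_div, Complex.norm_real, Real.norm_eq_abs, abs_of_pos h2pos, div_self (ne_of_gt h2pos)]
    have hvne : v ≠ 0 := by intro h; rw [h] at hvabs; simp at hvabs
    set zq : ℂ := (starRingEnd ℂ) ((Real.sqrt 2 : ℝ) * z₁ * v ^ k) with hzqdef
    have hzqabs : ‖zq‖ = Real.sqrt 2 * ‖z₁‖ := by
      rw [hzqdef, Complex.norm_conj, norm_mul, norm_mul, Complex.norm_real, Real.norm_eq_abs,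
        abs_of_pos s2pos, norm_zpow, hvabs, one_zpow, mul_one]
    have hzq : ‖zq‖ ≤ 1 := by
      rw [hzqabs]
      nlinarith [norm_nonneg z₁, Real.sqrt_nonneg (2:ℝ), s2sq]
    refine ⟨Quot.mk _ (Sum.inr ⟨⟨v, hvabs⟩, ⟨zq, hzq⟩⟩), ?_⟩
    apply Subtype.ext
    simp only [Quot.lift, F, Sum.elim_inr, f₂]
    refine Prod.ext ?_ ?_
    · simp only [hzqdef]
      rw [Complex.conj_conj]
      rw [mul_assoc, mul_assoc, ← zpow_add₀ hvne]
      simp only [add_neg_cancel, zpow_zero, mul_one]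
      rw [mul_comm ((Real.sqrt 2 : ℝ) : ℂ) z₁, mul_div_assoc, div_self s2ne, mul_one]
    · simp only [hzqabs]
      have : (1 : ℝ) - (Real.sqrt 2 * ‖z₁‖) ^ 2 / 2 = ‖z₂‖ ^ 2 := by
        rw [mul_pow, s2sq]; linarith
      rw [this, Real.sqrt_sq (norm_nonneg z₂), hvdef]
      exact div_mul_cancel₀ z₂ (by simpa using ne_of_gt h2pos)
    
instance : CompactSpace {u : ℂ // ‖u‖ = 1} := by
  have hc : IsCompact {u : ℂ | ‖u‖ = 1} := by
    convert isCompact_sphere (0 : ℂ) 1 using 1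
    ext u
    simp [mem_sphere_zero_iff_norm]
  exact isCompact_iff_compactSpace.mp hc

instance : CompactSpace {w : ℂ // ‖w‖ ≤ 1} := by
  have hc : IsCompact {w : ℂ | ‖w‖ ≤ 1} := by
    convert isCompact_closedBall (0 : ℂ) 1 using 1
    ext w
    simp [mem_closedBall_zero_iff]
  exact isCompact_iff_compactSpace.mp hc

lemma sqrtpart_cont : Continuous fun x : SolidTorus =>
    ((Real.sqrt (1 - ‖(x.2 : ℂ)‖ ^ 2 / 2) : ℝ) : ℂ) :=
  Complex.continuous_ofReal.comp (Real.continuous_sqrt.comp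
    (continuous_const.sub (((continuous_norm.comp
      (continuous_subtype_val.comp continuous_snd)).pow 2).div_const 2)))

lemma f₁_cont : Continuous f₁ := by
  apply Continuous.subtype_mk
  exact ((continuous_subtype_val.comp continuous_fst).mul sqrtpart_cont).prodMk
    ((continuous_subtype_val.comp continuous_snd).div_const _)

lemma f₂_cont (k : ℤ) : Continuous (f₂ k) := by
  apply Continuous.subtype_mk
  have hconj : Continuous fun q : SolidTorus => (starRingEnd ℂ) (q.2 : ℂ) :=
    continuous_star.comp (continuous_subtype_val.comp continuous_snd)
  have hzpow : Continuous fun q : SolidTorus => (q.1 : ℂ) ^ (-k) := by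
    rw [continuous_iff_continuousAt]
    intro q
    refine ContinuousAt.zpow₀
      ((continuous_subtype_val.comp continuous_fst).continuousAt) (-k) (Or.inl ?_)
    intro h
    have h2 : (q.1 : ℂ) = 0 := h
    have := q.1.2
    rw [h2] at this; simp at this
  exact ((hconj.mul hzpow).div_const _).prodMk
    ((continuous_subtype_val.comp continuous_fst).mul sqrtpart_cont)

end SurgeryProof

open SurgeryProof

/-- For every integral framing `k`, surgery along `S¹ × {*} ⊂ S¹ × S²` produces the
3-sphere: the space obtained from two copies of the solid torus `S¹ × D²` by gluing
each boundary point `(u,w)`, `|w| = 1`, of the first copy to the boundary point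
`(w, u⁻¹·w⁻ᵏ)` of the second copy is homeomorphic to `S³ ⊂ ℂ²`. -/
theorem surgery_yields_sphere (k : ℤ) :
    Nonempty (SurgeredSpace k ≃ₜ
      {z : ℂ × ℂ // ‖z.1‖ ^ 2 + ‖z.2‖ ^ 2 = 1}) := by
  have hcont : Continuous (Quot.lift (F k) (compat k)) :=
    continuous_quot_lift _ ((f₁_cont.sumElim (f₂_cont k)))
  let e : SurgeredSpace k ≃ S3 := Equiv.ofBijective _ ⟨F_inj k, F_surj k⟩
  exact ⟨Continuous.homeoOfEquivCompactToT2 (f := e) hcont⟩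
end
end
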